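/- For each n ≥ 0, the composite functor 𝒫₀([n]) ≅ PΔ[n] → Δ_res^{≤n} ⊂ Δ^{≤n} is left cofinal (homotopy initial), where 𝒫₀([n]) is the poset of nonempty subsets of [n], PΔ[n] is the poset of non-degenerate simplices of the standard n-simplex Δ[n], and Δ_res^{≤n} is the subcategory of Δ^{≤n} containing only the injective maps. -/

import Mathlib

/-!
The poset `𝒫₀([n])` of nonempty subsets of `[n]`, its canonical functor to the
truncated simplex category `Δ≤n` (factoring through the subcategory `Δ_res^{≤n}`
of injective maps, and corresponding to the poset `PΔ[n]` of non-degenerate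
simplices of the standard `n`-simplex under the isomorphism `𝒫₀([n]) ≅ PΔ[n]`),
and the notion of a left cofinal (homotopy initial) functor, encoded via
contractibility of the nerves of the comma categories.
-/

open CategoryTheory CategoryTheory.Limits Simplicial

namespace StabilizationPaper

/-- the poset `𝒫₀([n])` of nonempty subsets of `[n] = {0, 1, …, n}`, ordered by
inclusion; under the correspondence sending a nonempty subset to the
non-degenerate simplex it spans, it is isomorphic to the poset `PΔ[n]` of
non-degenerate simplices of the standard `n`-simplex `Δ[n]`. -/
def NEP (n : ℕ) : Type := {A : Finset (Fin (n + 1)) // A.Nonempty}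

instance (n : ℕ) : PartialOrder (NEP n) := by unfold NEP; infer_instance

/-- the order-preserving map `Fin T.card → Fin T'.card` induced by an inclusion
`T ⊆ T'` of finite sets of integers (the "face" inclusion of the simplices they
span) -/
def restrictEmb {n : ℕ} {T T' : Finset (Fin (n + 1))} (h : T ⊆ T') :
    Fin T.card →o Fin T'.card where
  toFun i := (T'.orderIsoOfFin rfl).symm
    ⟨T.orderEmbOfFin rfl i, h (T.orderEmbOfFin_mem rfl i)⟩
  monotone' i j hij := (T'.orderIsoOfFin rfl).symm.monotone
    (Subtype.mk_le_mk.mpr ((T.orderEmbOfFin rfl).monotone hij))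

lemma restrictEmb_refl {n : ℕ} {T : Finset (Fin (n + 1))} (h : T ⊆ T) (i : Fin T.card) :
    restrictEmb h i = i := by
  show (T.orderIsoOfFin rfl).symm _ = i
  rw [OrderIso.symm_apply_eq]
  exact Subtype.ext (T.coe_orderIsoOfFin_apply rfl i).symm

lemma orderEmbOfFin_symm_apply {n : ℕ} (s : Finset (Fin (n + 1))) (x : {a // a ∈ s}) :
    s.orderEmbOfFin rfl ((s.orderIsoOfFin rfl).symm x) = ↑x := by
  rw [← s.coe_orderIsoOfFin_apply rfl, OrderIso.apply_symm_apply]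

lemma restrictEmb_trans {n : ℕ} {T T' T'' : Finset (Fin (n + 1))}
    (h : T ⊆ T') (h' : T' ⊆ T'') (h'' : T ⊆ T'') (i : Fin T.card) :
    restrictEmb h' (restrictEmb h i) = restrictEmb h'' i := by
  show (T''.orderIsoOfFin rfl).symm _ = (T''.orderIsoOfFin rfl).symm _
  congr 1
  exact Subtype.ext (orderEmbOfFin_symm_apply T' _)

/-- the order-preserving map underlying `toTrunc` on morphisms -/
def truncHom {n : ℕ} {T T' : NEP n} (h : T.1 ⊆ T'.1) :
    Fin (T.1.card - 1 + 1) →o Fin (T'.1.card - 1 + 1) where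
  toFun i := Fin.cast (Nat.succ_pred_eq_of_pos T'.2.card_pos).symm
    (restrictEmb h (Fin.cast (Nat.succ_pred_eq_of_pos T.2.card_pos) i))
  monotone' i j hij := by
    have h1 : Fin.cast (Nat.succ_pred_eq_of_pos T.2.card_pos) i ≤
        Fin.cast (Nat.succ_pred_eq_of_pos T.2.card_pos) j := by
      simpa only [Fin.le_def, Fin.coe_cast] using hij
    have h2 := (restrictEmb h).monotone h1
    simpa only [Fin.le_def, Fin.coe_cast] using h2

/-- The composite functor `𝒫₀([n]) ≅ PΔ[n] ⟶ Δ_res^{≤n} ⊂ Δ^{≤n}`: a nonempty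
subset `T ⊆ [n]` is sent to `[T.card − 1]`, and an inclusion `T ⊆ T'` to the
corresponding injective order-preserving (coface) map. -/
def toTrunc (n : ℕ) : NEP n ⥤ SimplexCategory.Truncated n where
  obj T := ⟨SimplexCategory.mk (T.1.card - 1), by
    have h1 : T.1.card ≤ n + 1 := by
      simpa using Finset.card_le_univ T.1
    simp only [SimplexCategory.len_mk]
    omega⟩
  map {T T'} f := ObjectProperty.homMk (SimplexCategory.mkHom (truncHom (leOfHom f)))
  map_id T := by
    apply ObjectProperty.hom_ext
    apply SimplexCategory.Hom.ext
    ext i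
    simp only [truncHom, restrictEmb_refl, SimplexCategory.mkHom,
      SimplexCategory.Hom.toOrderHom_mk, OrderHom.coe_mk, Fin.coe_cast]
    rfl
  map_comp {T T' T''} f g := by
    apply ObjectProperty.hom_ext
    apply SimplexCategory.Hom.ext
    apply OrderHom.ext
    funext i
    show (truncHom (leOfHom (f ≫ g))) i = (truncHom (leOfHom g)) ((truncHom (leOfHom f)) i)
    show Fin.cast (Nat.succ_pred_eq_of_pos T''.2.card_pos).symm
        (restrictEmb (leOfHom (f ≫ g)) (Fin.cast (Nat.succ_pred_eq_of_pos T.2.card_pos) i)) =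
      Fin.cast (Nat.succ_pred_eq_of_pos T''.2.card_pos).symm
        (restrictEmb (leOfHom g) (Fin.cast (Nat.succ_pred_eq_of_pos T'.2.card_pos)
          (Fin.cast (Nat.succ_pred_eq_of_pos T'.2.card_pos).symm
            (restrictEmb (leOfHom f) (Fin.cast (Nat.succ_pred_eq_of_pos T.2.card_pos) i)))))
    rw [show Fin.cast (Nat.succ_pred_eq_of_pos T'.2.card_pos)
        (Fin.cast (Nat.succ_pred_eq_of_pos T'.2.card_pos).symm
          (restrictEmb (leOfHom f) (Fin.cast (Nat.succ_pred_eq_of_pos T.2.card_pos) i))) =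
        restrictEmb (leOfHom f) (Fin.cast (Nat.succ_pred_eq_of_pos T.2.card_pos) i) from by
      apply Fin.ext; simp]
    rw [restrictEmb_trans (leOfHom f) (leOfHom g) (leOfHom (f ≫ g))]

section Contractibility

/-- every simplex of the standard `0`-simplex is the iterated degeneracy of the
point -/
instance (m : SimplexCategoryᵒᵖ) : Subsingleton ((Δ[0] : SSet.{0}).obj m) :=
  ⟨fun a b => by
    apply (SSet.stdSimplex.objEquiv).injective
    apply SimplexCategory.Hom.ext
    apply OrderHom.ext
    funext x
    exact Subsingleton.elim (α := Fin 1) _ _⟩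

/-- the unique map to the point `Δ[0]` -/
def toPt (X : SSet.{0}) : X ⟶ Δ[0] where
  app m := TypeCat.ofHom fun _ => SSet.stdSimplex.objMk (OrderHom.const _ 0)
  naturality _ _ _ := by
    ext
    apply Subsingleton.elim

/-- the two vertices `Δ[0] ⟶ Δ[1]` -/
def vtx (i : Fin 2) : (Δ[0] : SSet.{0}) ⟶ Δ[1] :=
  SSet.stdSimplex.map
    (SimplexCategory.const (SimplexCategory.mk 0) (SimplexCategory.mk 1) i)

/-- the inclusion `X ⟶ X × Δ[1]` at the vertex `i` of the simplicial cylinder -/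
noncomputable def cylIncl (X : SSet.{0}) (i : Fin 2) : X ⟶ Limits.prod X Δ[1] :=
  Limits.prod.lift (𝟙 X) (toPt X ≫ vtx i)

/-- an (elementary) simplicial homotopy `X × Δ[1] ⟶ Y` from `f` to `g` -/
def SHomotopy {X Y : SSet.{0}} (f g : X ⟶ Y) : Prop :=
  ∃ H : Limits.prod X Δ[1] ⟶ Y, cylIncl X 0 ≫ H = f ∧ cylIncl X 1 ≫ H = g

/-- maps of simplicial sets connected by a zigzag of elementary simplicial
homotopies -/
def SHomotopicZigzag {X Y : SSet.{0}} : (X ⟶ Y) → (X ⟶ Y) → Prop :=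
  Relation.ReflTransGen fun f g => SHomotopy f g ∨ SHomotopy g f

/-- a simplicial set is contractible if it is simplicially homotopy equivalent
to the point `Δ[0]` -/
def SContractible (X : SSet.{0}) : Prop :=
  ∃ (s : Δ[0] ⟶ X) (r : X ⟶ Δ[0]),
    SHomotopicZigzag (r ≫ s) (𝟙 X) ∧ s ≫ r = 𝟙 Δ[0]

/-- a functor is left cofinal (homotopy initial) — so that restriction along it
preserves homotopy limits — if each of the comma categories `(F ↓ d)` has a
contractible nerve -/
def HomotopyInitial {C D : Type} [Category.{0} C] [Category.{0} D] (F : C ⥤ D) : Prop :=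
  ∀ d : D, SContractible (CategoryTheory.nerve (CostructuredArrow F d))

end Contractibility

section Bridge

open CategoryTheory

variable {C D : Type} [Category.{0} C] [Category.{0} D]

/-- the map of nerves induced by a functor -/
def nv (F : C ⥤ D) : nerve C ⟶ nerve D where
  app _ := TypeCat.ofHom fun x => x ⋙ F
  naturality _ _ _ := rfl

lemma nv_id : nv (𝟭 C) = 𝟙 (nerve C) := by
  apply NatTrans.ext; funext k; ext x; exact Functor.comp_id x

/-- functor `Fin (k+1) ⥤ Fin 2` from a simplex of `Δ[1]` -/
def sf {m : SimplexCategoryᵒᵖ} (φ : (Δ[1] : SSet.{0}).obj m) :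
    Fin (m.unop.len + 1) ⥤ Fin 2 :=
  φ.down.toOrderHom.monotone.functor

lemma sf_compat {m m' : SimplexCategoryᵒᵖ} (θ : m ⟶ m') (φ : (Δ[1] : SSet.{0}).obj m) :
    sf ((Δ[1] : SSet.{0}).map θ φ) = (SimplexCategory.toCat.map θ.unop).toFunctor ⋙ sf φ := by
  refine CategoryTheory.Functor.ext (fun i => ?_) (fun i j f => ?_)
  · rfl
  · apply Subsingleton.elim

/-- the simplicial homotopy associated to a natural transformation -/
noncomputable def homot {F G : C ⥤ D} (α : F ⟶ G) :
    Limits.prod (nerve C) (Δ[1] : SSet.{0}) ⟶ nerve D where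
  app m := TypeCat.ofHom fun z =>
    Functor.prod'
      (sf ((Limits.prod.snd : Limits.prod (nerve C) (Δ[1] : SSet.{0}) ⟶ Δ[1]).app m z))
      ((Limits.prod.fst : Limits.prod (nerve C) (Δ[1] : SSet.{0}) ⟶ nerve C).app m z)
      ⋙ Functor.uncurry.obj (ComposableArrows.mk₁ α)
  naturality m m' θ := by
    ext z
    have h1 := ConcreteCategory.congr_hom ((Limits.prod.fst :
      Limits.prod (nerve C) (Δ[1] : SSet.{0}) ⟶ nerve C).naturality θ) z
    have h2 := ConcreteCategory.congr_hom ((Limits.prod.snd :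
      Limits.prod (nerve C) (Δ[1] : SSet.{0}) ⟶ Δ[1]).naturality θ) z
    dsimp only [types_comp_apply, TypeCat.ofHom_apply] at h1 h2 ⊢
    change Functor.prod'
        (sf ((Limits.prod.snd : Limits.prod (nerve C) (Δ[1] : SSet.{0}) ⟶ Δ[1]).app m'
          ((Limits.prod (nerve C) (Δ[1] : SSet.{0})).map θ z)))
        ((Limits.prod.fst : Limits.prod (nerve C) (Δ[1] : SSet.{0}) ⟶ nerve C).app m'
          ((Limits.prod (nerve C) (Δ[1] : SSet.{0})).map θ z))
        ⋙ Functor.uncurry.obj (ComposableArrows.mk₁ α) =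
      (nerve D).map θ (Functor.prod'
        (sf ((Limits.prod.snd : Limits.prod (nerve C) (Δ[1] : SSet.{0}) ⟶ Δ[1]).app m z))
        ((Limits.prod.fst : Limits.prod (nerve C) (Δ[1] : SSet.{0}) ⟶ nerve C).app m z)
        ⋙ Functor.uncurry.obj (ComposableArrows.mk₁ α))
    rw [h1, h2, sf_compat]
    rfl

lemma sf_vtx (X : SSet.{0}) (i : Fin 2) (m : SimplexCategoryᵒᵖ) (x : X.obj m) :
    sf ((toPt X ≫ vtx i).app m x) = (Functor.const _).obj i := by
  refine CategoryTheory.Functor.ext (fun j => ?_) (fun a b f => ?_)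
  · rfl
  · apply Subsingleton.elim

lemma cyl_endpoint {F G : C ⥤ D} (α : F ⟶ G) (i : Fin 2) (m : SimplexCategoryᵒᵖ)
    (x : (nerve C).obj m) :
    (homot α).app m ((cylIncl (nerve C) i).app m x) =
      x ⋙ (ComposableArrows.mk₁ α).obj i := by
  have e1 : (Limits.prod.lift (𝟙 (nerve C)) (toPt (nerve C) ≫ vtx i)) ≫
      Limits.prod.fst = 𝟙 _ := Limits.prod.lift_fst _ _
  have e2 : (Limits.prod.lift (𝟙 (nerve C)) (toPt (nerve C) ≫ vtx i)) ≫
      Limits.prod.snd = toPt (nerve C) ≫ vtx i := Limits.prod.lift_snd _ _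
  have h1' : ((Limits.prod.lift (𝟙 (nerve C)) (toPt (nerve C) ≫ vtx i)) ≫
      (Limits.prod.fst : Limits.prod (nerve C) (Δ[1] : SSet.{0}) ⟶ nerve C)).app m x
      = ((𝟙 (nerve C) : nerve C ⟶ nerve C)).app m x := by rw [e1]
  have h2' : ((Limits.prod.lift (𝟙 (nerve C)) (toPt (nerve C) ≫ vtx i)) ≫
      (Limits.prod.snd : Limits.prod (nerve C) (Δ[1] : SSet.{0}) ⟶ Δ[1])).app m x
      = (toPt (nerve C) ≫ vtx i).app m x := by rw [e2]
  have h1 : (Limits.prod.fst : Limits.prod (nerve C) (Δ[1] : SSet.{0}) ⟶ nerve C).app m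
      ((Limits.prod.lift (𝟙 (nerve C)) (toPt (nerve C) ≫ vtx i)).app m x) = x := h1'
  have h2 : (Limits.prod.snd : Limits.prod (nerve C) (Δ[1] : SSet.{0}) ⟶ Δ[1]).app m
      ((Limits.prod.lift (𝟙 (nerve C)) (toPt (nerve C) ≫ vtx i)).app m x) =
      (toPt (nerve C) ≫ vtx i).app m x := h2'
  dsimp only [cylIncl, homot, TypeCat.ofHom_apply]
  change Functor.prod'
      (sf ((Limits.prod.snd : Limits.prod (nerve C) (Δ[1] : SSet.{0}) ⟶ Δ[1]).app m
        ((Limits.prod.lift (𝟙 (nerve C)) (toPt (nerve C) ≫ vtx i)).app m x)))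
      ((Limits.prod.fst : Limits.prod (nerve C) (Δ[1] : SSet.{0}) ⟶ nerve C).app m
        ((Limits.prod.lift (𝟙 (nerve C)) (toPt (nerve C) ≫ vtx i)).app m x))
      ⋙ Functor.uncurry.obj (ComposableArrows.mk₁ α) = _
  rw [h1, h2, sf_vtx]
  refine CategoryTheory.Functor.ext (fun j => ?_) (fun a b f => ?_)
  · rfl
  · show ((ComposableArrows.mk₁ α).map (𝟙 i)).app _ ≫ _ = _
    rw [CategoryTheory.Functor.map_id]
    simp
    rfl

lemma shomotopy_of_natTrans {F G : C ⥤ D} (α : F ⟶ G) : SHomotopy (nv F) (nv G) := by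
  refine ⟨homot α, ?_, ?_⟩
  · apply NatTrans.ext; funext m; ext x
    exact cyl_endpoint α 0 m x
  · apply NatTrans.ext; funext m; ext x
    exact cyl_endpoint α 1 m x

end Bridge


section ThinContract

open CategoryTheory

variable {C : Type} [Category.{0} C]

/-- pointwise comparability of endofunctors of a thin category -/
def FLE (F G : C ⥤ C) : Prop := ∀ X : C, Nonempty (F.obj X ⟶ G.obj X)

/-- zigzag of pointwise comparabilities -/
def FZig : (C ⥤ C) → (C ⥤ C) → Prop :=
  Relation.ReflTransGen fun F G => FLE F G ∨ FLE G F

variable [∀ (X Y : C), Subsingleton (X ⟶ Y)]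

/-- in a thin category, pointwise comparability yields a natural transformation -/
noncomputable def natTransOfFLE {F G : C ⥤ C} (h : FLE F G) : F ⟶ G where
  app X := (h X).some
  naturality _ _ _ := Subsingleton.elim _ _

lemma shomotopicZigzag_of_FZig {F G : C ⥤ C} (h : FZig F G) :
    SHomotopicZigzag (nv F) (nv G) := by
  induction h with
  | refl => exact Relation.ReflTransGen.refl
  | tail _ r ih =>
      exact ih.tail (r.elim
        (fun hle => Or.inl (shomotopy_of_natTrans (natTransOfFLE hle)))
        (fun hle => Or.inr (shomotopy_of_natTrans (natTransOfFLE hle))))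

lemma fzig_symm {F G : C ⥤ C} (h : FZig F G) : FZig G F := by
  induction h with
  | refl => exact Relation.ReflTransGen.refl
  | tail _ r ih => exact Relation.ReflTransGen.head (Or.symm r) ih

/-- the vertex map `Δ[0] ⟶ nerve C` at an object -/
def vertexMap (c₀ : C) : (Δ[0] : SSet.{0}) ⟶ nerve C where
  app m := TypeCat.ofHom fun _ => (Functor.const _).obj c₀
  naturality _ _ _ := rfl

lemma scontractible_of_FZig (c₀ : C) (h : FZig (𝟭 C) ((Functor.const C).obj c₀)) :
    SContractible (nerve C) := by
  refine ⟨vertexMap c₀, toPt _, ?_, ?_⟩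
  · have e : toPt (nerve C) ≫ vertexMap c₀ = nv ((Functor.const C).obj c₀) := rfl
    rw [e, ← nv_id]
    exact shomotopicZigzag_of_FZig (fzig_symm h)
  · apply NatTrans.ext; funext m; ext x
    apply Subsingleton.elim

end ThinContract

namespace Comb

variable {n m : ℕ}

abbrev Pt (n m : ℕ) := Fin (n+1) × Fin (m+1)

def Ch (S : Finset (Pt n m)) : Prop := ∀ p ∈ S, ∀ q ∈ S, p.1 ≤ q.1 → p.2 ≤ q.2

abbrev QS (n m : ℕ) : Type := {S : Finset (Pt n m) // S.Nonempty ∧ Ch S}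

instance : PartialOrder (QS n m) := by unfold QS; infer_instance

lemma QS.le_def {S S' : QS n m} : S ≤ S' ↔ S.1 ⊆ S'.1 := Iff.rfl

lemma Ch.subset {S T : Finset (Pt n m)} (h : Ch S) (hsub : T ⊆ S) : Ch T :=
  fun p hp q hq => h p (hsub hp) q (hsub hq)

def bad (v : ℕ) (p : Pt n m) : Prop := (p.2 : ℕ) = v ∧ v < (p.1 : ℕ)

instance (v : ℕ) : DecidablePred (bad v : Pt n m → Prop) := fun p => by
  unfold bad; infer_instance

def Inv (v : ℕ) (S : Finset (Pt n m)) : Prop :=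
  ∀ p ∈ S, (p.2 : ℕ) < v → (p.1 : ℕ) ≤ (p.2 : ℕ)

instance (v : ℕ) (S : Finset (Pt n m)) : Decidable (Inv v S) := by
  unfold Inv; infer_instance

def dia (v : ℕ) (h1 : v < n + 1) (h2 : v < m + 1) : Pt n m := (⟨v, h1⟩, ⟨v, h2⟩)

lemma chain_insert_dia {v : ℕ} (h1 : v < n + 1) (h2 : v < m + 1)
    {S : Finset (Pt n m)} (hch : Ch S) (hinv : Inv v S)
    (htrig : ∃ p ∈ S, bad v p) :
    Ch (insert (dia v h1 h2) S) := by
  obtain ⟨a, ha, ha2, ha1⟩ := htrig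
  intro p hp q hq hle
  rw [Finset.mem_insert] at hp hq
  rcases hp with rfl | hp <;> rcases hq with rfl | hq
  · exact le_refl _
  · -- p = dia, q ∈ S
    by_contra hcon
    push_neg at hcon
    have hq2 : (q.2 : ℕ) < v := hcon
    have := hinv q hq hq2
    have hle' : (v : ℕ) ≤ (q.1 : ℕ) := hle
    omega
  · -- p ∈ S, q = dia : p.1 ≤ v → p.2 ≤ v
    have hlt : (p.1 : ℕ) ≤ v := hle
    have : p.1 ≤ a.1 := by
      rw [Fin.le_def]; omega
    have := hch p hp a ha this
    show (p.2 : ℕ) ≤ v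
    rw [Fin.le_def] at this
    omega
  · exact hch p hp q hq hle

lemma inv_insert_dia {v : ℕ} (h1 : v < n + 1) (h2 : v < m + 1)
    {S : Finset (Pt n m)} (hinv : Inv v S) :
    Inv v (insert (dia v h1 h2) S) := by
  intro p hp hlt
  rw [Finset.mem_insert] at hp
  rcases hp with rfl | hp
  · exact absurd hlt (by simp [dia])
  · exact hinv p hp hlt

/-- add the diagonal point `(v,v)` if the `v`-row meets the region beyond the diagonal -/
def gmap (v : ℕ) (h1 : v < n + 1) (h2 : v < m + 1) (S : QS n m) : QS n m :=
  if h : (∃ p ∈ S.1, bad v p) ∧ Inv v S.1 then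
    ⟨insert (dia v h1 h2) S.1, ⟨Finset.insert_nonempty _ _,
      chain_insert_dia h1 h2 S.2.2 h.2 h.1⟩⟩
  else S

/-- remove the part of the `v`-row beyond the diagonal -/
def hmap (v : ℕ) (S : QS n m) : QS n m :=
  if h : (S.1.filter (fun p => ¬ bad v p)).Nonempty then
    ⟨S.1.filter (fun p => ¬ bad v p), ⟨h, S.2.2.subset (Finset.filter_subset _ _)⟩⟩
  else S

lemma le_gmap (v : ℕ) (h1 h2) (S : QS n m) : S ≤ gmap v h1 h2 S := by
  unfold gmap; split
  · exact fun p hp => Finset.mem_insert_of_mem hp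
  · exact le_refl _

lemma hmap_le (v : ℕ) (S : QS n m) : hmap v S ≤ S := by
  unfold hmap; split
  · exact Finset.filter_subset _ _
  · exact le_refl _

def postG (v : ℕ) (h1 : v < n + 1) (h2 : v < m + 1) (S : QS n m) : Prop :=
  Inv v S.1 ∧ ((∃ p ∈ S.1, bad v p) → dia v h1 h2 ∈ S.1)

lemma gmap_postG (v : ℕ) (h1 h2) (S : QS n m) (hinv : Inv v S.1) :
    postG v h1 h2 (gmap v h1 h2 S) := by
  unfold gmap
  split
  · exact ⟨inv_insert_dia h1 h2 hinv, fun _ => Finset.mem_insert_self _ _⟩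
  · next hcon =>
    refine ⟨hinv, fun htrig => absurd ⟨htrig, hinv⟩ hcon⟩

lemma dia_not_bad (v : ℕ) (h1 : v < n+1) (h2 : v < m+1) : ¬ bad v (dia v h1 h2 : Pt n m) := by
  simp [bad, dia]

lemma hmap_eq_filter {v : ℕ} {h1 : v < n+1} {h2 : v < m+1} {S : QS n m}
    (hpg : postG v h1 h2 S) :
    (hmap v S).1 = S.1.filter (fun p => ¬ bad v p) := by
  have hne : (S.1.filter (fun p => ¬ bad v p)).Nonempty := by
    by_cases htrig : ∃ p ∈ S.1, bad v p
    · exact ⟨dia v h1 h2, Finset.mem_filter.2 ⟨hpg.2 htrig, dia_not_bad v h1 h2⟩⟩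
    · push_neg at htrig
      obtain ⟨p, hp⟩ := S.2.1
      exact ⟨p, Finset.mem_filter.2 ⟨hp, htrig p hp⟩⟩
  unfold hmap
  rw [dif_pos hne]

lemma hmap_inv_succ {v : ℕ} {h1 : v < n+1} {h2 : v < m+1} {S : QS n m}
    (hpg : postG v h1 h2 S) : Inv (v+1) (hmap v S).1 := by
  rw [hmap_eq_filter hpg]
  intro p hp hlt
  rw [Finset.mem_filter] at hp
  obtain ⟨hpS, hnb⟩ := hp
  rcases Nat.lt_succ_iff_lt_or_eq.1 hlt with h | h
  · exact hpg.1 p hpS h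
  · unfold bad at hnb
    push_neg at hnb
    have := hnb h
    omega

lemma gmap_mono {v : ℕ} {h1 h2} {S S' : QS n m} (hle : S ≤ S')
    (hS : Inv v S.1) (hS' : Inv v S'.1) :
    gmap v h1 h2 S ≤ gmap v h1 h2 S' := by
  unfold gmap
  by_cases ht : ∃ p ∈ S.1, bad v p
  · have ht' : ∃ p ∈ S'.1, bad v p := by
      obtain ⟨p, hp, hb⟩ := ht; exact ⟨p, hle hp, hb⟩
    rw [dif_pos ⟨ht, hS⟩, dif_pos ⟨ht', hS'⟩]
    exact Finset.insert_subset_insert _ hle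
  · rw [dif_neg (fun hc => ht hc.1)]
    exact le_trans hle (le_gmap v h1 h2 S')

lemma hmap_mono {v : ℕ} {h1 : v < n+1} {h2 : v < m+1} {S S' : QS n m} (hle : S ≤ S')
    (hS : postG v h1 h2 S) (hS' : postG v h1 h2 S') :
    hmap v S ≤ hmap v S' := by
  have e1 := hmap_eq_filter hS
  have e2 := hmap_eq_filter hS'
  show (hmap v S).1 ⊆ (hmap v S').1
  rw [e1, e2]
  exact Finset.filter_subset_filter _ hle

end Comb

namespace Comb2
open Comb

variable {n m : ℕ}

/-- the final "apex" map: insert `(m,m)` -/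
def ffin (hm : m ≤ n) (S : QS n m) : QS n m :=
  if h : Inv (m+1) S.1 then
    ⟨insert (dia m (by omega) (Nat.lt_succ_self m)) S.1,
      ⟨Finset.insert_nonempty _ _, by
        intro p hp q hq hle
        rw [Finset.mem_insert] at hp hq
        rcases hp with rfl | hp <;> rcases hq with rfl | hq
        · exact le_refl _
        · -- dia ≤ q.1 → m ≤ q.2
          have h1 : (m : ℕ) ≤ (q.1 : ℕ) := hle
          have h2 : (q.1 : ℕ) ≤ q.2 := h q hq (Nat.lt_succ_of_le (Nat.le_of_lt_succ q.2.2))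
          show (m : ℕ) ≤ (q.2 : ℕ)
          omega
        · show (p.2 : ℕ) ≤ m
          exact Nat.le_of_lt_succ p.2.2
        · exact S.2.2 p hp q hq hle⟩⟩
  else S

def q0 (hm : m ≤ n) : QS n m :=
  ⟨{dia m (by omega) (Nat.lt_succ_self m)}, ⟨Finset.singleton_nonempty _, by
    intro p hp q hq _
    rw [Finset.mem_singleton] at hp hq
    subst hp; subst hq; exact le_refl _⟩⟩

lemma le_ffin (hm : m ≤ n) (S : QS n m) : S ≤ ffin hm S := by
  unfold ffin; split
  · exact fun p hp => Finset.mem_insert_of_mem hp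
  · exact le_refl _

lemma q0_le_ffin (hm : m ≤ n) {S : QS n m} (h : Inv (m+1) S.1) :
    q0 hm ≤ ffin hm S := by
  unfold ffin
  rw [dif_pos h]
  show ({_} : Finset (Pt n m)) ⊆ _
  rw [Finset.singleton_subset_iff]
  exact Finset.mem_insert_self _ _

lemma ffin_mono (hm : m ≤ n) {S S' : QS n m} (hle : S ≤ S')
    (h : Inv (m+1) S.1) (h' : Inv (m+1) S'.1) : ffin hm S ≤ ffin hm S' := by
  unfold ffin
  rw [dif_pos h, dif_pos h']
  exact Finset.insert_subset_insert _ hle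

/-- one step of a zigzag of monotone maps -/
def mstep (f g : QS n m → QS n m) : Prop :=
  Monotone f ∧ Monotone g ∧ ((∀ x, f x ≤ g x) ∨ ∀ x, g x ≤ f x)

/-- zigzag of pointwise-comparable monotone maps -/
def mzig : (QS n m → QS n m) → (QS n m → QS n m) → Prop :=
  Relation.ReflTransGen mstep

lemma phase (hm : m ≤ n) : ∀ v : ℕ, v ≤ m + 1 →
    ∃ k : QS n m → QS n m, Monotone k ∧ mzig id k ∧ ∀ S, Inv v (k S).1 := by
  intro v
  induction v with
  | zero =>
      exact fun _ => ⟨id, monotone_id, Relation.ReflTransGen.refl,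
        fun S p hp h => by omega⟩
  | succ w ih =>
      intro hv
      obtain ⟨k, hk, hzig, hinv⟩ := ih (by omega)
      have h1 : w < n + 1 := by omega
      have h2 : w < m + 1 := by omega
      have monoGk : Monotone (fun S => gmap w h1 h2 (k S)) :=
        fun a b hab => gmap_mono (hk hab) (hinv _) (hinv _)
      have pg : ∀ S, postG w h1 h2 (gmap w h1 h2 (k S)) :=
        fun S => gmap_postG w h1 h2 (k S) (hinv S)
      have monoK' : Monotone (fun S => hmap w (gmap w h1 h2 (k S))) :=
        fun a b hab => hmap_mono (monoGk hab) (pg a) (pg b)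
      refine ⟨fun S => hmap w (gmap w h1 h2 (k S)), monoK', ?_, ?_⟩
      · exact (hzig.tail ⟨hk, monoGk, Or.inl (fun x => le_gmap w h1 h2 (k x))⟩).tail
          ⟨monoGk, monoK', Or.inr (fun x => hmap_le w _)⟩
      · exact fun S => hmap_inv_succ (pg S)

theorem main_zigzag (hm : m ≤ n) :
    mzig (id : QS n m → QS n m) (fun _ => q0 hm) := by
  obtain ⟨k, hk, hzig, hinv⟩ := phase hm (m+1) (le_refl _)
  have monoF : Monotone (fun S => ffin hm (k S)) :=
    fun a b hab => ffin_mono hm (hk hab) (hinv _) (hinv _)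
  exact (hzig.tail ⟨hk, monoF, Or.inl (fun x => le_ffin hm (k x))⟩).tail
    ⟨monoF, monotone_const, Or.inr (fun x => q0_le_ffin hm (hinv x))⟩

end Comb2


section TransferSetup

open CategoryTheory Comb Comb2

variable {n : ℕ} {d : SimplexCategory.Truncated n}

/-- the index of an element of a finite set -/
def idx {T : Finset (Fin (n+1))} (hT : T.Nonempty) {t : Fin (n+1)} (ht : t ∈ T) :
    Fin (T.card - 1 + 1) :=
  Fin.cast (Nat.succ_pred_eq_of_pos hT.card_pos).symm ((T.orderIsoOfFin rfl).symm ⟨t, ht⟩)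

lemma idx_mono {T : Finset (Fin (n+1))} (hT : T.Nonempty) {t u : Fin (n+1)}
    (ht : t ∈ T) (hu : u ∈ T) (h : t ≤ u) : idx hT ht ≤ idx hT hu := by
  have : ((T.orderIsoOfFin rfl).symm ⟨t, ht⟩ : Fin T.card) ≤
      (T.orderIsoOfFin rfl).symm ⟨u, hu⟩ :=
    (T.orderIsoOfFin rfl).symm.monotone (Subtype.mk_le_mk.mpr h)
  simpa only [Fin.le_def, idx, Fin.coe_cast] using this

lemma emb_idx {T : Finset (Fin (n+1))} (hT : T.Nonempty) {t : Fin (n+1)} (ht : t ∈ T) :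
    T.orderEmbOfFin rfl (Fin.cast (Nat.succ_pred_eq_of_pos hT.card_pos) (idx hT ht)) = t := by
  have : Fin.cast (Nat.succ_pred_eq_of_pos hT.card_pos) (idx hT ht) =
      (T.orderIsoOfFin rfl).symm ⟨t, ht⟩ := Fin.ext (by simp [idx])
  rw [this, orderEmbOfFin_symm_apply]

lemma idx_emb {T : Finset (Fin (n+1))} (hT : T.Nonempty) (k : Fin (T.card - 1 + 1)) :
    idx hT (T.orderEmbOfFin_mem rfl (Fin.cast (Nat.succ_pred_eq_of_pos hT.card_pos) k)) = k := by
  unfold idx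
  rw [show (⟨T.orderEmbOfFin rfl (Fin.cast (Nat.succ_pred_eq_of_pos hT.card_pos) k), _⟩ :
      {x // x ∈ T}) = T.orderIsoOfFin rfl (Fin.cast (Nat.succ_pred_eq_of_pos hT.card_pos) k)
      from Subtype.ext (T.coe_orderIsoOfFin_apply rfl _).symm,
    OrderIso.symm_apply_apply]
  exact Fin.ext (by simp)

lemma emb_truncHom {T T' : NEP n} (h : T.1 ⊆ T'.1) (k : Fin (T.1.card - 1 + 1)) :
    T'.1.orderEmbOfFin rfl (Fin.cast (Nat.succ_pred_eq_of_pos T'.2.card_pos) (truncHom h k))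
      = T.1.orderEmbOfFin rfl (Fin.cast (Nat.succ_pred_eq_of_pos T.2.card_pos) k) := by
  have e1 : Fin.cast (Nat.succ_pred_eq_of_pos T'.2.card_pos) (truncHom h k) =
      restrictEmb h (Fin.cast (Nat.succ_pred_eq_of_pos T.2.card_pos) k) :=
    Fin.ext (by simp [truncHom]; rfl)
  rw [e1]
  dsimp [restrictEmb]
  exact orderEmbOfFin_symm_apply T'.1 _

lemma truncHom_idx {T T' : NEP n} (h : T.1 ⊆ T'.1) {t : Fin (n+1)} (ht : t ∈ T.1) :
    truncHom h (idx T.2 ht) = idx T'.2 (h ht) := by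
  have e := emb_truncHom h (idx T.2 ht)
  rw [emb_idx] at e
  have e2 := emb_idx T'.2 (h ht)
  have h3 := (T'.1.orderEmbOfFin rfl).injective (e.trans e2.symm)
  have h4 := congrArg Fin.val h3
  simp only [Fin.coe_cast] at h4
  exact Fin.ext h4

end TransferSetup


section TransferV

open CategoryTheory Comb Comb2

variable {n : ℕ} {d : SimplexCategory.Truncated n}

/-- the value of the order map of an object of the comma category at a point of its domain -/
def eval (X : CostructuredArrow (toTrunc n) d) {t : Fin (n+1)} (ht : t ∈ X.left.1) :
    Fin (d.obj.len + 1) :=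
  (SimplexCategory.Hom.toOrderHom X.hom.hom) (idx X.left.2 ht)

lemma eval_mono (X : CostructuredArrow (toTrunc n) d) {t u : Fin (n+1)}
    (ht : t ∈ X.left.1) (hu : u ∈ X.left.1) (h : t ≤ u) : eval X ht ≤ eval X hu :=
  (SimplexCategory.Hom.toOrderHom X.hom.hom).monotone (idx_mono X.left.2 ht hu h)

lemma eval_map {X Y : CostructuredArrow (toTrunc n) d} (φ : X ⟶ Y)
    {t : Fin (n+1)} (ht : t ∈ X.left.1) :
    eval Y (leOfHom φ.left ht) = eval X ht := by
  dsimp only [eval]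
  rw [← truncHom_idx (leOfHom φ.left) ht]
  show (SimplexCategory.Hom.toOrderHom ((toTrunc n).map φ.left ≫ Y.hom).hom)
      (idx X.left.2 ht) = _
  rw [CostructuredArrow.w φ]

/-- the graph of (the order map of) an object of the comma category -/
def graphOf (X : CostructuredArrow (toTrunc n) d) : Finset (Pt n d.obj.len) :=
  X.left.1.attach.image (fun t => (t.1, eval X t.2))

lemma mem_graphOf {X : CostructuredArrow (toTrunc n) d} {p : Pt n d.obj.len} :
    p ∈ graphOf X ↔ ∃ ht : p.1 ∈ X.left.1, p.2 = eval X ht := by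
  constructor
  · intro hp
    unfold graphOf at hp
    rw [Finset.mem_image] at hp
    obtain ⟨t, _, ht2⟩ := hp
    subst ht2
    exact ⟨t.2, rfl⟩
  · rintro ⟨ht, hp2⟩
    unfold graphOf
    rw [Finset.mem_image]
    exact ⟨⟨p.1, ht⟩, Finset.mem_attach _ _, by rw [← hp2]⟩

/-- the functor from the comma category to the poset of chains -/
def Vfun : CostructuredArrow (toTrunc n) d ⥤ QS n d.obj.len where
  obj X := ⟨graphOf X, by
    obtain ⟨t, ht⟩ := X.left.2
    exact ⟨(t, eval X ht), mem_graphOf.2 ⟨ht, rfl⟩⟩, by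
    intro p hp q hq hle
    obtain ⟨hp1, hp2⟩ := mem_graphOf.1 hp
    obtain ⟨hq1, hq2⟩ := mem_graphOf.1 hq
    rw [hp2, hq2]
    exact eval_mono X hp1 hq1 hle⟩
  map {X Y} φ := homOfLE (by
    intro p hp
    obtain ⟨hp1, hp2⟩ := mem_graphOf.1 hp
    refine mem_graphOf.2 ⟨leOfHom φ.left hp1, ?_⟩
    rw [hp2, eval_map φ hp1])
  map_id _ := Subsingleton.elim _ _
  map_comp _ _ := Subsingleton.elim _ _

end TransferV


section TransferW

open CategoryTheory Comb Comb2

variable {n : ℕ} {d : SimplexCategory.Truncated n}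

lemma exists_unique_of_mem_fst {S : QS n d.obj.len} {t : Fin (n+1)}
    (ht : t ∈ S.1.image Prod.fst) : ∃! p, p ∈ S.1 ∧ p.1 = t := by
  rw [Finset.mem_image] at ht
  obtain ⟨p, hp, hp1⟩ := ht
  refine ⟨p, ⟨hp, hp1⟩, ?_⟩
  rintro q ⟨hq, hq1⟩
  have h1 := S.2.2 q hq p hp (le_of_eq (hq1.trans hp1.symm))
  have h2 := S.2.2 p hp q hq (le_of_eq (hp1.trans hq1.symm))
  have : q.2 = p.2 := le_antisymm h1 h2
  exact Prod.ext (hq1.trans hp1.symm) this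

/-- the value of the monotone partial map encoded by a chain -/
noncomputable def vOf (S : QS n d.obj.len) {t : Fin (n+1)}
    (ht : t ∈ S.1.image Prod.fst) : Fin (d.obj.len + 1) :=
  (Finset.choose _ S.1 (exists_unique_of_mem_fst ht)).2

lemma vOf_spec (S : QS n d.obj.len) {t : Fin (n+1)} (ht : t ∈ S.1.image Prod.fst) :
    (t, vOf S ht) ∈ S.1 := by
  have h1 := Finset.choose_mem (fun p => p.1 = t) S.1 (exists_unique_of_mem_fst ht)
  have h2 := Finset.choose_property (fun p => p.1 = t) S.1 (exists_unique_of_mem_fst ht)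
  have : (t, vOf S ht) = Finset.choose (fun p => p.1 = t) S.1 (exists_unique_of_mem_fst ht) :=
    Prod.ext h2.symm rfl
  rw [this]
  exact h1

lemma vOf_unique (S : QS n d.obj.len) {t : Fin (n+1)} (ht : t ∈ S.1.image Prod.fst)
    {w : Fin (d.obj.len + 1)} (hw : (t, w) ∈ S.1) : vOf S ht = w := by
  obtain ⟨p, _, hu⟩ := exists_unique_of_mem_fst ht
  have e1 := hu (t, vOf S ht) ⟨vOf_spec S ht, rfl⟩
  have e2 := hu (t, w) ⟨hw, rfl⟩
  have := e1.trans e2.symm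
  exact congrArg Prod.snd this

lemma vOf_mono (S : QS n d.obj.len) {t u : Fin (n+1)} (ht : t ∈ S.1.image Prod.fst)
    (hu : u ∈ S.1.image Prod.fst) (h : t ≤ u) : vOf S ht ≤ vOf S hu :=
  S.2.2 (t, vOf S ht) (vOf_spec S ht) (u, vOf S hu) (vOf_spec S hu) h

/-- the object of the comma category associated to a chain -/
noncomputable def Wobj (S : QS n d.obj.len) : CostructuredArrow (toTrunc n) d :=
  CostructuredArrow.mk (Y := (⟨S.1.image Prod.fst, S.2.1.image Prod.fst⟩ : NEP n))
    (ObjectProperty.homMk (SimplexCategory.mkHom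
      ⟨fun k => vOf S ((S.1.image Prod.fst).orderEmbOfFin_mem rfl
          (Fin.cast (Nat.succ_pred_eq_of_pos (S.2.1.image Prod.fst).card_pos) k)),
        fun k l hkl => vOf_mono S _ _ (((S.1.image Prod.fst).orderEmbOfFin rfl).monotone
          (by simpa only [Fin.le_def, Fin.coe_cast] using hkl))⟩))

lemma Wobj_left (S : QS n d.obj.len) : (Wobj S).left.1 = S.1.image Prod.fst := rfl

end TransferW


section TransferMain

open CategoryTheory Comb Comb2

variable {n : ℕ} {d : SimplexCategory.Truncated n}

instance : ∀ (X Y : CostructuredArrow (toTrunc n) d), Subsingleton (X ⟶ Y) := fun X Y =>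
  ⟨fun f g => CostructuredArrow.hom_ext f g (Subsingleton.elim _ _)⟩

lemma vOf_congr (S : QS n d.obj.len) {t t' : Fin (n+1)} (e : t = t')
    (ht : t ∈ S.1.image Prod.fst) (ht' : t' ∈ S.1.image Prod.fst) :
    vOf S ht = vOf S ht' := by subst e; rfl

lemma Wobj_hom_apply (S : QS n d.obj.len) (k) :
    (SimplexCategory.Hom.toOrderHom (Wobj S).hom.hom) k =
      vOf S ((S.1.image Prod.fst).orderEmbOfFin_mem rfl
        (Fin.cast (Nat.succ_pred_eq_of_pos (S.2.1.image Prod.fst).card_pos) k)) := rfl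

/-- the functor from the poset of chains to the comma category -/
noncomputable def Wfun : QS n d.obj.len ⥤ CostructuredArrow (toTrunc n) d where
  obj := Wobj
  map {S S'} φ := CostructuredArrow.homMk
    (homOfLE (show (Wobj S).left ≤ (Wobj S').left from
      Finset.image_subset_image (leOfHom φ)))
    (by
      apply ObjectProperty.hom_ext
      apply SimplexCategory.Hom.ext
      apply OrderHom.ext
      funext k
      show (SimplexCategory.Hom.toOrderHom (Wobj S').hom.hom)
        (truncHom (Finset.image_subset_image (leOfHom φ)) k) = _
      erw [Wobj_hom_apply S', Wobj_hom_apply S]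
      have e := emb_truncHom (T := (Wobj S).left) (T' := (Wobj S').left)
        (Finset.image_subset_image (leOfHom φ)) k
      have m : (S.1.image Prod.fst).orderEmbOfFin rfl
          (Fin.cast (Nat.succ_pred_eq_of_pos (S.2.1.image Prod.fst).card_pos) k)
          ∈ S.1.image Prod.fst :=
        (S.1.image Prod.fst).orderEmbOfFin_mem rfl _
      have m2 := Finset.image_subset_image (Finset.le_iff_subset.1 (leOfHom φ)) m
      erw [vOf_congr S' e _ m2]
      exact vOf_unique S' m2 (leOfHom φ (vOf_spec S m)))
  map_id _ := Subsingleton.elim _ _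
  map_comp _ _ := Subsingleton.elim _ _

/-- the unit morphism `X ⟶ W (V X)` -/
noncomputable def unitHom (X : CostructuredArrow (toTrunc n) d) :
    X ⟶ Wobj (Vfun.obj X) := by
  have hl' : X.left.1 ⊆ (Vfun.obj X).1.image Prod.fst := by
    intro t ht
    exact Finset.mem_image.2 ⟨(t, eval X ht), mem_graphOf.2 ⟨ht, rfl⟩, rfl⟩
  have hl : X.left ≤ (Wobj (Vfun.obj X)).left := hl'
  refine CostructuredArrow.homMk (homOfLE hl) ?_
  apply ObjectProperty.hom_ext
  apply SimplexCategory.Hom.ext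
  apply OrderHom.ext
  funext k
  show (SimplexCategory.Hom.toOrderHom (Wobj (Vfun.obj X)).hom.hom) (truncHom hl k) =
    (SimplexCategory.Hom.toOrderHom X.hom.hom) k
  erw [Wobj_hom_apply]
  have e := emb_truncHom (T := X.left)
    (T' := ⟨(Vfun.obj X).1.image Prod.fst, (Vfun.obj X).2.1.image Prod.fst⟩) hl' k
  have hmem : X.left.1.orderEmbOfFin rfl
      (Fin.cast (Nat.succ_pred_eq_of_pos X.left.2.card_pos) k) ∈ X.left.1 :=
    X.left.1.orderEmbOfFin_mem rfl _
  have m2 : X.left.1.orderEmbOfFin rfl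
      (Fin.cast (Nat.succ_pred_eq_of_pos X.left.2.card_pos) k)
      ∈ (Vfun.obj X).1.image Prod.fst := hl' hmem
  erw [vOf_congr (Vfun.obj X) e _ m2]
  have e2 : vOf (Vfun.obj X) m2 = eval X hmem :=
    vOf_unique _ m2 (mem_graphOf.2 ⟨hmem, rfl⟩)
  rw [e2]
  show (SimplexCategory.Hom.toOrderHom X.hom.hom) (idx X.left.2 hmem) = _
  rw [idx_emb X.left.2 k]

lemma transfer {f g : QS n d.obj.len → QS n d.obj.len} (h : mzig f g)
    (F : CostructuredArrow (toTrunc n) d ⥤ CostructuredArrow (toTrunc n) d)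
    (hF : ∀ X, F.obj X = Wobj (f (Vfun.obj X))) :
    ∀ (G : CostructuredArrow (toTrunc n) d ⥤ CostructuredArrow (toTrunc n) d),
      (∀ X, G.obj X = Wobj (g (Vfun.obj X))) → FZig F G := by
  induction h with
  | refl =>
      intro G hG
      exact Relation.ReflTransGen.single
        (Or.inl (fun X => ⟨eqToHom ((hF X).trans (hG X).symm)⟩))
  | @tail b c _ r ih =>
      intro G hG
      have hb : Monotone b := r.1
      have z1 := ih (Vfun ⋙ hb.functor ⋙ Wfun) (fun X => rfl)
      rcases r.2.2 with hle | hle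
      · exact z1.tail (Or.inl (fun X =>
          ⟨Wfun.map (homOfLE (hle (Vfun.obj X))) ≫ eqToHom (hG X).symm⟩))
      · exact z1.tail (Or.inr (fun X =>
          ⟨eqToHom (hG X) ≫ Wfun.map (homOfLE (hle (Vfun.obj X)))⟩))

end TransferMain

/-- For each `n ≥ 0`, the composite functor
`𝒫₀([n]) ≅ PΔ[n] ⟶ Δ_res^{≤n} ⊂ Δ^{≤n}` — sending a nonempty subset `T ⊆ [n]`
(equivalently, the non-degenerate simplex of `Δ[n]` it spans) to `[|T| − 1]`
and an inclusion to the corresponding injective order-preserving map — is left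
cofinal (homotopy initial): every comma category over it has contractible
nerve, so restriction along it preserves homotopy limits. -/
theorem statement_13 (n : ℕ) : HomotopyInitial (toTrunc n) := by
  intro d
  have hM : d.obj.len ≤ n := d.property
  have step1 : FLE (𝟭 (CostructuredArrow (toTrunc n) d)) (Vfun ⋙ Wfun) :=
    fun X => ⟨unitHom X⟩
  have h2 := transfer (Comb2.main_zigzag hM) (Vfun ⋙ Wfun) (fun X => rfl)
    ((Functor.const _).obj (Wobj (Comb2.q0 hM))) (fun X => rfl)
  exact scontractible_of_FZig _
    (Relation.ReflTransGen.trans (Relation.ReflTransGen.single (Or.inl step1)) h2)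

end StabilizationPaper
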